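/- Let Σ = (X, 𝒰, φ) be a forward-complete control system that is monotone with respect to inputs, with 𝒰(x) = 𝒰 for all x ∈ X. Suppose (i) there exists ρ ∈ K∞ such that x₋ ≤ x ≤ x₊ implies ‖x‖_X ≤ ρ(‖x₋‖_X + ‖x₊‖_X), and (ii) there exists η ∈ K∞ such that for every u ∈ 𝒰 there exist u₋, u₊ ∈ 𝒰_c with u₋ ≤ u ≤ u₊ and max(‖u₋‖_𝒰, ‖u₊‖_𝒰) ≤ η(‖u‖_𝒰). Then Σ is ISS if and only if Σ is ISS with respect to inputs in 𝒰_c. -/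

import Mathlib

/-- Class `K`: continuous, strictly increasing, zero at zero. -/
def ClassK (γ : NNReal → NNReal) : Prop :=
  Continuous γ ∧ StrictMono γ ∧ γ 0 = 0

/-- Class `K∞`: class `K` and unbounded. -/
def ClassKInf (γ : NNReal → NNReal) : Prop :=
  ClassK γ ∧ ∀ M : NNReal, ∃ r : NNReal, M < γ r

/-- Class `KL`. -/
def ClassKL (β : NNReal → NNReal → NNReal) : Prop :=
  (∀ t : NNReal, ClassK (fun r => β r t)) ∧
    ∀ r : NNReal, 0 < r →
      Antitone (fun t => β r t) ∧
        Filter.Tendsto (fun t => β r t) Filter.atTop (nhds 0)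

/-- ISS with respect to a class of inputs `S`, for a system where every input is
admissible for every state. -/
def ISSOn {X U : Type*} [NormedAddCommGroup X] [NormedAddCommGroup U]
    (φ : NNReal → X → U → X) (S : Set U) : Prop :=
  ∃ β γ, ClassKL β ∧ ClassK γ ∧
    ∀ (x : X), ∀ u ∈ S, ∀ t : NNReal, ‖φ t x u‖₊ ≤ β ‖x‖₊ t + γ ‖u‖₊

/-- A monotone-w.r.t.-inputs control system (with all inputs admissible for all states)
is ISS iff it is ISS w.r.t. a subclass of inputs `Uc` satisfying the sandwich conditions. -/
theorem stmt_4 {X U : Type*} [NormedAddCommGroup X] [Preorder X]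
    [NormedAddCommGroup U] [Preorder U]
    (φ : NNReal → X → U → X) (Uc : Set U)
    (hmono : ∀ (t : NNReal) (x : X) (u₁ u₂ : U), u₁ ≤ u₂ → φ t x u₁ ≤ φ t x u₂)
    (ρ : NNReal → NNReal) (hρ : ClassKInf ρ)
    (hsandwich : ∀ xm x xp : X, xm ≤ x → x ≤ xp → ‖x‖₊ ≤ ρ (‖xm‖₊ + ‖xp‖₊))
    (η : NNReal → NNReal) (hη : ClassKInf η)
    (hinput : ∀ u : U, ∃ um ∈ Uc, ∃ up ∈ Uc, um ≤ u ∧ u ≤ up ∧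
      ‖um‖₊ ≤ η ‖u‖₊ ∧ ‖up‖₊ ≤ η ‖u‖₊) :
    ISSOn φ (Set.univ : Set U) ↔ ISSOn φ Uc := by
  constructor
  · rintro ⟨β, γ, hβ, hγ, h⟩
    exact ⟨β, γ, hβ, hγ, fun x u _ t => h x u (Set.mem_univ u) t⟩
  · rintro ⟨β, γ, hβ, hγ, h⟩
    obtain ⟨⟨hρc, hρm, hρ0⟩, -⟩ := hρ
    obtain ⟨⟨hηc, hηm, hη0⟩, -⟩ := hη
    refine ⟨fun r t => ρ (4 * β r t), fun r => ρ (4 * γ (η r)), ⟨?_, ?_⟩, ?_, ?_⟩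
    · intro t
      refine ⟨hρc.comp (continuous_const.mul (hβ.1 t).1), ?_, ?_⟩
      · intro a b hab
        exact hρm (mul_lt_mul_of_pos_left ((hβ.1 t).2.1 hab) (by norm_num))
      · simp [(hβ.1 t).2.2, hρ0]
    · intro r hr
      obtain ⟨hanti, htend⟩ := hβ.2 r hr
      refine ⟨fun s t hst => hρm.monotone (mul_le_mul_right (hanti hst) 4), ?_⟩
      have : Filter.Tendsto (fun t => ρ (4 * β r t)) Filter.atTop (nhds (ρ (4 * 0))) :=
        (hρc.tendsto _).comp (htend.const_mul 4)
      simpa [hρ0] using this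
    · refine ⟨hρc.comp (continuous_const.mul (hγ.1.comp hηc)), ?_, ?_⟩
      · intro a b hab
        exact hρm (mul_lt_mul_of_pos_left (hγ.2.1 (hηm hab)) (by norm_num))
      · simp [hη0, hγ.2.2, hρ0]
    · intro x u _ t
      obtain ⟨um, hum, up, hup, hle1, hle2, hn1, hn2⟩ := hinput u
      have hum' : ‖φ t x um‖₊ ≤ β ‖x‖₊ t + γ (η ‖u‖₊) :=
        (h x um hum t).trans (add_le_add_right (hγ.2.1.monotone hn1) _)
      have hup' : ‖φ t x up‖₊ ≤ β ‖x‖₊ t + γ (η ‖u‖₊) :=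
        (h x up hup t).trans (add_le_add_right (hγ.2.1.monotone hn2) _)
      set a := β ‖x‖₊ t with ha
      set b := γ (η ‖u‖₊) with hb
      have key := hsandwich _ _ _ (hmono t x um u hle1) (hmono t x u up hle2)
      calc ‖φ t x u‖₊ ≤ ρ (‖φ t x um‖₊ + ‖φ t x up‖₊) := key
        _ ≤ ρ ((a + b) + (a + b)) := hρm.monotone (add_le_add hum' hup')
        _ ≤ ρ (4 * a) + ρ (4 * b) := by
            rcases le_total a b with hab | hab
            · refine le_add_left (hρm.monotone ?_)
              calc (a + b) + (a + b) ≤ (b + b) + (b + b) :=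
                    add_le_add (add_le_add_left hab b) (add_le_add_left hab b)
                _ = 4 * b := by ring
            · refine le_add_right (hρm.monotone ?_)
              calc (a + b) + (a + b) ≤ (a + a) + (a + a) :=
                    add_le_add (add_le_add_right hab a) (add_le_add_right hab a)
                _ = 4 * a := by ring
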